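/- Critical lines of the spatial Euler problem (with a = 1): let z₀ ∈ ℝ with z₀ ∉ {−1, 1}, let w ∈ ℝ, and put q = (0,0,z₀), p = (0,0,w). Then (i) the total derivative of L_z at (q,p) (as a map ℝ⁶ → ℝ) is zero, so the derivative of the integral map F = (H, L_z, G) at (q,p) is not surjective, i.e. (q,p) is a critical point of F; (ii) L_z(q,p) = 0; and (iii) G(q,p) − H(q,p) = μ₁ − μ₂ if z₀ > 1, G(q,p) − H(q,p) = μ₁ + μ₂ if −1 < z₀ < 1, and G(q,p) − H(q,p) = μ₂ − μ₁ if z₀ < −1. Hence the values of F at such points lie on the critical lines ℓ₂ = {g = h + μ₁ − μ₂, l = 0}, ℓ₃ = {g = h + μ₁ + μ₂, l = 0}, ℓ₁ = {g = h + μ₂ − μ₁, l = 0}, respectively. -/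

import Mathlib

noncomputable section

open Real Filter Topology
open scoped RealInnerProductSpace

/-- Euclidean 3-space. -/
abbrev R3 : Type := EuclideanSpace ℝ (Fin 3)

/-- The vector `(x, y, z)` in `R3`. -/
def vec3 (x y z : ℝ) : R3 := (WithLp.equiv 2 (Fin 3 → ℝ)).symm ![x, y, z]

/-- The first center `o₁ = (0,0,-a)`. -/
def ctr1 (a : ℝ) : R3 := vec3 0 0 (-a)

/-- The second center `o₂ = (0,0,a)`. -/
def ctr2 (a : ℝ) : R3 := vec3 0 0 a

/-- The Euler two-center potential `V(q) = -μ₁/r₁(q) - μ₂/r₂(q)`. -/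
def eulerV (a μ1 μ2 : ℝ) (q : R3) : ℝ := -μ1 / ‖q - ctr1 a‖ - μ2 / ‖q - ctr2 a‖

/-- The angular momentum `L_z(q,p) = x p_y - y p_x`. -/
def angMom (q p : R3) : ℝ := q 0 * p 1 - q 1 * p 0

/-- The cross product `q × p` in `R3`. -/
def cross3 (q p : R3) : R3 :=
  vec3 (q 1 * p 2 - q 2 * p 1) (q 2 * p 0 - q 0 * p 2) (q 0 * p 1 - q 1 * p 0)

/-- The Euler Hamiltonian `H(q,p) = ‖p‖²/2 + V(q)`. -/
def eulerH (a μ1 μ2 : ℝ) (q p : R3) : ℝ := ‖p‖ ^ 2 / 2 + eulerV a μ1 μ2 q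

/-- The separation constant
`G(q,p) = H + (‖q×p‖² - a²(pₓ²+p_y²))/2 + a(z+a)μ₁/r₁ - a(z-a)μ₂/r₂`. -/
def eulerG (a μ1 μ2 : ℝ) (q p : R3) : ℝ :=
  eulerH a μ1 μ2 q p + (‖cross3 q p‖ ^ 2 - a ^ 2 * ((p 0) ^ 2 + (p 1) ^ 2)) / 2
    + a * (q 2 + a) * μ1 / ‖q - ctr1 a‖ - a * (q 2 - a) * μ2 / ‖q - ctr2 a‖

lemma vec3_apply0 (x y z : ℝ) : vec3 x y z 0 = x := by simp [vec3]
lemma vec3_apply1 (x y z : ℝ) : vec3 x y z 1 = y := by simp [vec3]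
lemma vec3_apply2 (x y z : ℝ) : vec3 x y z 2 = z := by simp [vec3]

lemma norm_vec3_sub (s t : ℝ) : ‖(vec3 0 0 s : R3) - vec3 0 0 t‖ = |s - t| := by
  have h : (vec3 0 0 s : R3) - vec3 0 0 t = vec3 0 0 (s - t) := by
    ext i; fin_cases i <;> simp [vec3]
  rw [h, EuclideanSpace.norm_eq]
  simp [vec3, Fin.sum_univ_three, Real.sqrt_sq_eq_abs]

lemma hasFDerivAt_angMom_zero (z0 w : ℝ) :
    HasFDerivAt (fun x : R3 × R3 => angMom x.1 x.2) (0 : (R3 × R3) →L[ℝ] ℝ)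
      (vec3 0 0 z0, vec3 0 0 w) := by
  set pt : R3 × R3 := (vec3 0 0 z0, vec3 0 0 w)
  have h1 : HasFDerivAt (fun x : R3 × R3 => x.1 0)
      ((EuclideanSpace.proj (0:Fin 3) : R3 →L[ℝ] ℝ).comp (ContinuousLinearMap.fst ℝ R3 R3)) pt :=
    (EuclideanSpace.proj (0:Fin 3) : R3 →L[ℝ] ℝ).hasFDerivAt.comp pt (hasFDerivAt_fst)
  have h2 : HasFDerivAt (fun x : R3 × R3 => x.1 1)
      ((EuclideanSpace.proj (1:Fin 3) : R3 →L[ℝ] ℝ).comp (ContinuousLinearMap.fst ℝ R3 R3)) pt :=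
    (EuclideanSpace.proj (1:Fin 3) : R3 →L[ℝ] ℝ).hasFDerivAt.comp pt (hasFDerivAt_fst)
  have h3 : HasFDerivAt (fun x : R3 × R3 => x.2 0)
      ((EuclideanSpace.proj (0:Fin 3) : R3 →L[ℝ] ℝ).comp (ContinuousLinearMap.snd ℝ R3 R3)) pt :=
    (EuclideanSpace.proj (0:Fin 3) : R3 →L[ℝ] ℝ).hasFDerivAt.comp pt (hasFDerivAt_snd)
  have h4 : HasFDerivAt (fun x : R3 × R3 => x.2 1)
      ((EuclideanSpace.proj (1:Fin 3) : R3 →L[ℝ] ℝ).comp (ContinuousLinearMap.snd ℝ R3 R3)) pt :=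
    (EuclideanSpace.proj (1:Fin 3) : R3 →L[ℝ] ℝ).hasFDerivAt.comp pt (hasFDerivAt_snd)
  have h := (h1.mul h4).sub (h2.mul h3)
  have hpt1 : (pt.1 0 : ℝ) = 0 := by simp [pt, vec3]
  have hpt2 : (pt.1 1 : ℝ) = 0 := by simp [pt, vec3]
  have hpt3 : (pt.2 0 : ℝ) = 0 := by simp [pt, vec3]
  have hpt4 : (pt.2 1 : ℝ) = 0 := by simp [pt, vec3]
  rw [hpt1, hpt2, hpt3, hpt4] at h
  exact h.congr_fderiv (by simp)

theorem statement13 (μ1 μ2 z0 w : ℝ) (hz1 : z0 ≠ -1) (hz2 : z0 ≠ 1) :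
    fderiv ℝ (fun x : R3 × R3 => angMom x.1 x.2) (vec3 0 0 z0, vec3 0 0 w) = 0 ∧
    ¬ Function.Surjective
        ⇑(fderiv ℝ (fun x : R3 × R3 =>
            (eulerH 1 μ1 μ2 x.1 x.2, angMom x.1 x.2, eulerG 1 μ1 μ2 x.1 x.2))
          (vec3 0 0 z0, vec3 0 0 w)) ∧
    angMom (vec3 0 0 z0) (vec3 0 0 w) = 0 ∧
    (1 < z0 →
      eulerG 1 μ1 μ2 (vec3 0 0 z0) (vec3 0 0 w)
        - eulerH 1 μ1 μ2 (vec3 0 0 z0) (vec3 0 0 w) = μ1 - μ2) ∧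
    (-1 < z0 → z0 < 1 →
      eulerG 1 μ1 μ2 (vec3 0 0 z0) (vec3 0 0 w)
        - eulerH 1 μ1 μ2 (vec3 0 0 z0) (vec3 0 0 w) = μ1 + μ2) ∧
    (z0 < -1 →
      eulerG 1 μ1 μ2 (vec3 0 0 z0) (vec3 0 0 w)
        - eulerH 1 μ1 μ2 (vec3 0 0 z0) (vec3 0 0 w) = μ2 - μ1) := by
  set pt : R3 × R3 := (vec3 0 0 z0, vec3 0 0 w) with hptdef
  have hA := hasFDerivAt_angMom_zero z0 w
  have hfd : fderiv ℝ (fun x : R3 × R3 => angMom x.1 x.2) pt = 0 := hA.fderiv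
  -- G - H computation
  have hcross : cross3 (vec3 0 0 z0) (vec3 0 0 w) = vec3 0 0 0 := by
    simp [cross3, vec3_apply0, vec3_apply1, vec3_apply2]
  have hnc : ‖cross3 (vec3 0 0 z0) (vec3 0 0 w)‖ = 0 := by
    have : (vec3 0 0 0 : R3) = 0 := by ext i; fin_cases i <;> simp [vec3]
    rw [hcross, this, norm_zero]
  have hr1 : ‖(vec3 0 0 z0 : R3) - ctr1 1‖ = |z0 + 1| := by
    rw [ctr1, norm_vec3_sub]; ring_nf
  have hr2 : ‖(vec3 0 0 z0 : R3) - ctr2 1‖ = |z0 - 1| := by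
    rw [ctr2, norm_vec3_sub]
  have hGH : eulerG 1 μ1 μ2 (vec3 0 0 z0) (vec3 0 0 w)
      - eulerH 1 μ1 μ2 (vec3 0 0 z0) (vec3 0 0 w)
      = (z0 + 1) * μ1 / |z0 + 1| - (z0 - 1) * μ2 / |z0 - 1| := by
    rw [eulerG, hr1, hr2, hnc]
    simp [vec3_apply0, vec3_apply1, vec3_apply2]
    ring
  have hz1' : z0 + 1 ≠ 0 := fun h => hz1 (by linarith)
  have hz2' : z0 - 1 ≠ 0 := fun h => hz2 (by linarith)
  refine ⟨hfd, ?_, by simp [angMom, vec3_apply0, vec3_apply1], ?_, ?_, ?_⟩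
  · intro hsurj
    obtain ⟨u, hu⟩ := hsurj (0, 1, 0)
    set F := fun x : R3 × R3 =>
      (eulerH 1 μ1 μ2 x.1 x.2, angMom x.1 x.2, eulerG 1 μ1 μ2 x.1 x.2) with hF
    set proj : ℝ × ℝ × ℝ →L[ℝ] ℝ :=
      (ContinuousLinearMap.fst ℝ ℝ ℝ).comp (ContinuousLinearMap.snd ℝ ℝ (ℝ × ℝ)) with hproj
    by_cases hdiff : DifferentiableAt ℝ F pt
    · have hcomp : HasFDerivAt (fun x : R3 × R3 => angMom x.1 x.2)
          (proj.comp (fderiv ℝ F pt)) pt :=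
        proj.hasFDerivAt.comp pt hdiff.hasFDerivAt
      have heq : proj.comp (fderiv ℝ F pt) = 0 := hcomp.unique hA
      have : proj (fderiv ℝ F pt u) = 0 := by
        rw [← ContinuousLinearMap.comp_apply, heq]; rfl
      rw [hu] at this
      simp [hproj] at this
    · rw [fderiv_zero_of_not_differentiableAt hdiff] at hu
      simpa using congrArg (fun v : ℝ × ℝ × ℝ => v.2.1) hu
  · intro h
    rw [hGH, abs_of_pos (by linarith : (0:ℝ) < z0 + 1), abs_of_pos (by linarith : (0:ℝ) < z0 - 1),
      mul_comm (z0+1) μ1, mul_div_assoc, div_self hz1', mul_one,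
      mul_comm (z0-1) μ2, mul_div_assoc, div_self hz2', mul_one]
  · intro h1 h2
    rw [hGH, abs_of_pos (by linarith : (0:ℝ) < z0 + 1), abs_of_neg (by linarith : z0 - 1 < 0),
      mul_comm (z0+1) μ1, mul_div_assoc, div_self hz1', mul_one,
      div_neg, mul_comm (z0-1) μ2, mul_div_assoc, div_self hz2', mul_one]
    ring
  · intro h
    rw [hGH, abs_of_neg (by linarith : z0 + 1 < 0), abs_of_neg (by linarith : z0 - 1 < 0),
      div_neg, mul_comm (z0+1) μ1, mul_div_assoc, div_self hz1', mul_one,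
      div_neg, mul_comm (z0-1) μ2, mul_div_assoc, div_self hz2', mul_one]
    ring
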